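/- For every HGT-free σ-reconciliation (T,S,μ,σ) satisfying axiom (R5), the chain of subgraph inclusions Θ(T,ℓ_μ) ⊆ Θ(T,ℓ̂_T) ⊆ 𝔅_sym(T,σ) ⊆ 𝔅(T,σ) holds, where undirected graphs are identified with symmetric digraphs. -/
import Mathlib


/-- A planted phylogenetic rooted tree, encoded by a parent function on a
finite vertex set.  The root `0_T` is a fixed point of `parent`; every vertex
reaches the root by iterating `parent`; the root has exactly one child
(`planted`); and every inner vertex (non-root vertex having a child) has at
least two children (`phylo`). -/
structure PPTree where
  V : Type
  [fintypeV : Fintype V]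
  [decEqV : DecidableEq V]
  root : V
  parent : V → V
  parent_root : parent root = root
  reach : ∀ v : V, ∃ n : ℕ, parent^[n] v = root
  planted : ∃! v : V, v ≠ root ∧ parent v = root
  phylo : ∀ v : V, v ≠ root → (∃ u, parent u = v ∧ u ≠ v) →
      ∃ u w, parent u = v ∧ parent w = v ∧ u ≠ w ∧ u ≠ v ∧ w ≠ v

attribute [instance] PPTree.fintypeV PPTree.decEqV

namespace PPTree

variable (T : PPTree)

/-- `T.le x y` means `x ⪯_T y`, i.e. `y` is an ancestor of `x` (or `x = y`). -/
def le (x y : T.V) : Prop := ∃ n : ℕ, T.parent^[n] x = y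

/-- `T.lt x y` means `x ≺_T y`. -/
def lt (x y : T.V) : Prop := T.le x y ∧ x ≠ y

/-- Leaves are the `⪯_T`-minimal vertices, i.e. vertices without children. -/
def isLeaf (v : T.V) : Prop := ∀ u, T.parent u = v → u = v

/-- Inner vertices: neither leaves nor the planted root. -/
def inner (v : T.V) : Prop := v ≠ T.root ∧ ¬ T.isLeaf v

/-- The last common ancestor of two vertices: the `⪯_T`-minimal common
ancestor. -/
noncomputable def lca (x y : T.V) : T.V :=
  @Classical.epsilon _ ⟨T.root⟩
    fun v => T.le x v ∧ T.le y v ∧ ∀ w, T.le x w → T.le y w → T.le v w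

/-- The last common ancestor of a set of vertices. -/
noncomputable def lcaSet (A : Set T.V) : T.V :=
  @Classical.epsilon _ ⟨T.root⟩
    fun v => (∀ a ∈ A, T.le a v) ∧ ∀ w, (∀ a ∈ A, T.le a w) → T.le v w

/-- `ρ_T`, the unique child of the planted root. -/
noncomputable def rho : T.V := T.planted.choose

theorem rho_ne_root : T.rho ≠ T.root := T.planted.choose_spec.1.1

/-- Edges of `T`, identified with their child endpoint: the vertex `v ≠ 0_T`
represents the edge `(parent v, v)`. -/
abbrev Edge := {v : T.V // v ≠ T.root}

/-- The union `V(T) ∪ E(T)`. -/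
abbrev VE := T.V ⊕ T.Edge

/-- The ancestor order `⪯_T` extended to `V(T) ∪ E(T)`: for an edge `e = uv`
(`u` the parent of `v`), `x ⪯ e` iff `x ⪯ v`, `e ⪯ x` iff `u ⪯ x`, and
`e ⪯ f` iff the child endpoints are comparable accordingly. -/
def leVE : T.VE → T.VE → Prop
  | Sum.inl x, Sum.inl y => T.le x y
  | Sum.inl x, Sum.inr e => T.le x e.1
  | Sum.inr e, Sum.inl y => T.le (T.parent e.1) y
  | Sum.inr e, Sum.inr f => T.le e.1 f.1

def ltVE (a b : T.VE) : Prop := T.leVE a b ∧ a ≠ b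

/-- Two elements of `V(T) ∪ E(T)` are comparable. -/
def cmpVE (a b : T.VE) : Prop := T.leVE a b ∨ T.leVE b a

/-- Membership in `L(T)` for elements of `V(T) ∪ E(T)`. -/
def isLeafVE : T.VE → Prop
  | Sum.inl v => T.isLeaf v
  | Sum.inr _ => False

/-- Map an element of `V(T) ∪ E(T)` to a vertex (an edge `uv` is sent to its
child endpoint `v`). -/
def toVertex : T.VE → T.V
  | Sum.inl v => v
  | Sum.inr e => e.1

end PPTree

/-- Axioms (R0)–(R3) of a reconciliation map `μ : V(T) → V(S) ∪ E(S)`. -/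
structure IsRecon (T S : PPTree) (μ : T.V → S.VE) : Prop where
  R0 : ∀ x, μ x = Sum.inl S.root ↔ x = T.root
  R1 : ∀ x, S.isLeafVE (μ x) ↔ T.isLeaf x
  R2 : ∀ x y, T.lt y x → (∃ u, μ x = Sum.inl u) → (∃ v, μ y = Sum.inl v) → μ x ≠ μ y
  R3 : ∀ x y, T.lt y x → ¬ S.ltVE (μ x) (μ y)

/-- A reconciliation is HGT-free if the images of the endpoints of every edge
of `T` are `⪯_S`-comparable. -/
def IsHGTFree (T S : PPTree) (μ : T.V → S.VE) : Prop :=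
  ∀ v : T.V, v ≠ T.root → S.cmpVE (μ (T.parent v)) (μ v)

/-- `(T,S,μ,σ)` is a σ-reconciliation when `μ` restricted to `L(T)` equals
`σ`. -/
def SigmaCompat (T S : PPTree) (μ : T.V → S.VE) (σ : T.V → S.V) : Prop :=
  ∀ x, T.isLeaf x → μ x = Sum.inl (σ x)

/-- A time map for `T`. -/
def IsTimeMap (T : PPTree) (τ : T.V → ℝ) : Prop :=
  ∀ x y, T.lt x y → τ x < τ y

/-- Axioms (S0)–(S3) of a relaxed scenario `(T,S,μ,τ_T,τ_S)`. -/
structure IsRelaxedScenario (T S : PPTree) (μ : T.V → S.VE)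
    (τT : T.V → ℝ) (τS : S.V → ℝ) : Prop where
  timeT : IsTimeMap T τT
  timeS : IsTimeMap S τS
  S0 : ∀ x, μ x = Sum.inl S.root ↔ x = T.root
  S1 : ∀ x, S.isLeafVE (μ x) ↔ T.isLeaf x
  S2 : ∀ x v, μ x = Sum.inl v → τS v = τT x
  S3 : ∀ x (e : S.Edge), μ x = Sum.inr e → τS e.1 < τT x ∧ τT x < τS (S.parent e.1)

/-- Axiom (R5) for a reconciliation `(T,S,μ)`: whenever `μ(x) ∈ V⁰(S)`,
(i) `μ(x) = lca_S(μ(v'),μ(v''))` for at least two distinct children `v',v''`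
of `x`, and (ii) the images of any two distinct children of `x` are
`⪯_S`-incomparable. -/
def R5 (T S : PPTree) (μ : T.V → S.VE) : Prop :=
  ∀ x u, μ x = Sum.inl u → u ≠ S.root → ¬ S.isLeaf u →
    ((∃ v' v'' : T.V, v' ≠ v'' ∧
        T.parent v' = x ∧ v' ≠ x ∧ T.parent v'' = x ∧ v'' ≠ x ∧
        u = S.lca (S.toVertex (μ v')) (S.toVertex (μ v''))) ∧
     (∀ v' v'' : T.V, T.parent v' = x → v' ≠ x → T.parent v'' = x → v'' ≠ x →
        v' ≠ v'' → ¬ S.cmpVE (μ v') (μ v'')))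

/-- The event label `ℓ_μ(u)` is a speciation `•`, i.e. `μ(u) ∈ V⁰(S)`. -/
def SpecEvent (T S : PPTree) (μ : T.V → S.VE) (u : T.V) : Prop :=
  ∃ v : S.V, μ u = Sum.inl v ∧ v ≠ S.root ∧ ¬ S.isLeaf v

/-- Edge `xy` of the orthology graph `Θ(T,ℓ_μ)`: `x,y` are distinct leaves
whose last common ancestor is labeled as a speciation by `ℓ_μ`. -/
def ThetaMu (T S : PPTree) (μ : T.V → S.VE) (x y : T.V) : Prop :=
  T.isLeaf x ∧ T.isLeaf y ∧ x ≠ y ∧ SpecEvent T S μ (T.lca x y)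

/-- The extremal event labeling `ℓ̂_T` assigns a duplication `□` to `u`:
some two distinct children `v',v''` of `u` satisfy
`σ(L(T(v'))) ∩ σ(L(T(v''))) ≠ ∅`. -/
def ExtremalDup (T : PPTree) {Y : Type} (σ : T.V → Y) (u : T.V) : Prop :=
  ∃ v' v'' : T.V, v' ≠ v'' ∧
    T.parent v' = u ∧ v' ≠ u ∧ T.parent v'' = u ∧ v'' ≠ u ∧
    ∃ l l' : T.V, T.isLeaf l ∧ T.isLeaf l' ∧ T.le l v' ∧ T.le l' v'' ∧ σ l = σ l'

/-- Edge `xy` of the orthology graph `Θ(T,ℓ̂_T)` of the extremal event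
labeling: `x,y` are distinct leaves whose last common ancestor is labeled `•`
by `ℓ̂_T`. -/
def ThetaHat (T : PPTree) {Y : Type} (σ : T.V → Y) (x y : T.V) : Prop :=
  T.isLeaf x ∧ T.isLeaf y ∧ x ≠ y ∧ ¬ ExtremalDup T σ (T.lca x y)

/-- Arc `(x,y)` of the best match graph `𝔅(T,σ)`: `y` is a best match of
`x`. -/
def BMArc (T : PPTree) {Y : Type} (σ : T.V → Y) (x y : T.V) : Prop :=
  T.isLeaf x ∧ T.isLeaf y ∧ σ x ≠ σ y ∧
    ∀ y' : T.V, T.isLeaf y' → σ y' = σ y → T.le (T.lca x y) (T.lca x y')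

namespace PPTree

variable {T : PPTree}

theorem le_refl' (x : T.V) : T.le x x := ⟨0, rfl⟩

theorem le_trans' {x y z : T.V} (h1 : T.le x y) (h2 : T.le y z) : T.le x z := by
  obtain ⟨m, hm⟩ := h1; obtain ⟨n, hn⟩ := h2
  exact ⟨n + m, by rw [Function.iterate_add_apply, hm, hn]⟩

theorem le_parent' (x : T.V) : T.le x (T.parent x) := ⟨1, rfl⟩

theorem iterate_root (n : ℕ) : T.parent^[n] T.root = T.root :=
  Function.iterate_fixed T.parent_root n

theorem le_root' (x : T.V) : T.le x T.root := T.reach x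

theorem le_antisymm' {a b : T.V} (h1 : T.le a b) (h2 : T.le b a) : a = b := by
  obtain ⟨m, hm⟩ := h1; obtain ⟨n, hn⟩ := h2
  rcases Nat.eq_zero_or_pos (n + m) with h | h
  · have hm0 : m = 0 := by omega
    subst hm0; simpa using hm
  · have hcyc : T.parent^[n + m] a = a := by
      rw [Function.iterate_add_apply, hm, hn]
    have hmul : ∀ t : ℕ, T.parent^[(n + m) * t] a = a := by
      intro t; induction t with
      | zero => simp
      | succ t ih => rw [Nat.mul_succ, Function.iterate_add_apply, hcyc, ih]
    obtain ⟨k, hk⟩ := T.reach a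
    have hroot : a = T.root := by
      have h1 : (n + m) * (k + 1) = ((n + m) * (k + 1) - k) + k := by
        have : k ≤ (n + m) * (k + 1) := by nlinarith
        omega
      have h2 := hmul (k + 1)
      rw [h1, Function.iterate_add_apply, hk, iterate_root] at h2
      exact h2.symm
    subst hroot
    rw [iterate_root] at hm; exact hm

theorem eq_of_iter_leaf {x : T.V} (hx : T.isLeaf x) :
    ∀ n (y : T.V), T.parent^[n] y = x → y = x := by
  intro n
  induction n with
  | zero => exact fun y h => h
  | succ n ih =>
    intro y h
    rw [Function.iterate_succ_apply'] at h
    exact ih y (hx _ h)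

theorem eq_of_le_leaf {x y : T.V} (hx : T.isLeaf x) (h : T.le y x) : y = x := by
  obtain ⟨n, hn⟩ := h; exact eq_of_iter_leaf hx n y hn

theorem le_total_of_le {w a b : T.V} (h1 : T.le w a) (h2 : T.le w b) :
    T.le a b ∨ T.le b a := by
  obtain ⟨m, hm⟩ := h1; obtain ⟨n, hn⟩ := h2
  rcases Nat.le_total m n with h | h
  · exact Or.inl ⟨n - m, by rw [← hm, ← Function.iterate_add_apply, Nat.sub_add_cancel h, hn]⟩
  · exact Or.inr ⟨m - n, by rw [← hn, ← Function.iterate_add_apply, Nat.sub_add_cancel h, hm]⟩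

theorem le_cases' {a b : T.V} (h : T.le b a) : a = b ∨ T.le (T.parent b) a := by
  obtain ⟨k, hk⟩ := h
  rcases Nat.eq_zero_or_pos k with h0 | h0
  · left; rw [h0] at hk; exact hk.symm
  · right
    have hs : k = (k - 1) + 1 := by omega
    rw [hs, Function.iterate_succ_apply] at hk
    exact ⟨k - 1, hk⟩

theorem parent_ne_self {x : T.V} (hx : x ≠ T.root) : T.parent x ≠ x := by
  intro h
  have hfix : ∀ n, T.parent^[n] x = x := fun n => Function.iterate_fixed h n
  obtain ⟨k, hk⟩ := T.reach x
  exact hx ((hfix k) ▸ hk)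

theorem lca_spec (x y : T.V) :
    T.le x (T.lca x y) ∧ T.le y (T.lca x y) ∧
      ∀ w, T.le x w → T.le y w → T.le (T.lca x y) w := by
  classical
  have hP : ∃ n, T.le y (T.parent^[n] x) := by
    obtain ⟨m, hm⟩ := T.reach x
    exact ⟨m, hm ▸ le_root' y⟩
  have hex : ∃ v, T.le x v ∧ T.le y v ∧ ∀ w, T.le x w → T.le y w → T.le v w := by
    refine ⟨T.parent^[Nat.find hP] x, ⟨Nat.find hP, rfl⟩, Nat.find_spec hP, ?_⟩
    rintro w ⟨k, hk⟩ hyw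
    have hn : Nat.find hP ≤ k := Nat.find_min' hP (hk ▸ hyw)
    exact ⟨k - Nat.find hP, by
      rw [← Function.iterate_add_apply, Nat.sub_add_cancel hn, hk]⟩
  exact Classical.epsilon_spec hex

theorem le_lca_left (x y : T.V) : T.le x (T.lca x y) := (lca_spec x y).1
theorem le_lca_right (x y : T.V) : T.le y (T.lca x y) := (lca_spec x y).2.1
theorem lca_le (x y : T.V) {w} (h1 : T.le x w) (h2 : T.le y w) : T.le (T.lca x y) w :=
  (lca_spec x y).2.2 w h1 h2

theorem lca_comm (x y : T.V) : T.lca x y = T.lca y x :=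
  le_antisymm' (lca_le x y (le_lca_right y x) (le_lca_left y x))
    (lca_le y x (le_lca_right x y) (le_lca_left x y))

theorem exists_child {x z : T.V} (h : T.le x z) (hne : x ≠ z) :
    ∃ c, T.parent c = z ∧ T.le x c ∧ c ≠ z := by
  classical
  have hP : ∃ k, T.parent^[k] x = z := h
  obtain ⟨k, hk, hmin⟩ : ∃ k, T.parent^[k] x = z ∧ ∀ j, j < k → T.parent^[j] x ≠ z :=
    ⟨Nat.find hP, Nat.find_spec hP, fun j hj => Nat.find_min hP hj⟩
  have hk0 : k ≠ 0 := by
    intro h0; apply hne; rw [h0] at hk; exact hk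
  refine ⟨T.parent^[k - 1] x, ?_, ⟨k - 1, rfl⟩, hmin (k - 1) (by omega)⟩
  have hs : k = (k - 1) + 1 := by omega
  rw [hs, Function.iterate_succ_apply'] at hk
  exact hk

theorem leVE_refl (a : T.VE) : T.leVE a a := by
  cases a with
  | inl v => exact le_refl' v
  | inr e => exact le_refl' e.1

theorem leVE_trans {a b c : T.VE} (h1 : T.leVE a b) (h2 : T.leVE b c) : T.leVE a c := by
  cases a <;> cases b <;> cases c <;> simp only [PPTree.leVE] at h1 h2 ⊢
  case inl.inl.inl => exact le_trans' h1 h2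
  case inl.inl.inr => exact le_trans' h1 h2
  case inl.inr.inl => exact le_trans' h1 (le_trans' (le_parent' _) h2)
  case inl.inr.inr => exact le_trans' h1 h2
  case inr.inl.inl => exact le_trans' h1 h2
  case inr.inl.inr => exact le_trans' (le_parent' _) (le_trans' h1 h2)
  case inr.inr.inl e f z =>
    rcases le_cases' h1 with hh | hh
    · rw [hh] at h2; exact h2
    · exact le_trans' hh (le_trans' (le_parent' _) h2)
  case inr.inr.inr => exact le_trans' h1 h2

theorem cmp_of_above {w : T.V} {c c' : T.VE}
    (h1 : T.leVE (Sum.inl w) c) (h2 : T.leVE (Sum.inl w) c') : T.cmpVE c c' := by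
  cases c <;> cases c' <;> simp only [PPTree.leVE] at h1 h2 <;>
    simp only [PPTree.cmpVE, PPTree.leVE]
  case inl.inl => exact le_total_of_le h1 h2
  case inl.inr a f =>
    rcases le_total_of_le h1 h2 with h | h
    · exact Or.inl h
    · rcases le_cases' h with hh | hh
      · exact Or.inl (hh ▸ le_refl' _)
      · exact Or.inr hh
  case inr.inl e b =>
    rcases le_total_of_le h1 h2 with h | h
    · rcases le_cases' h with hh | hh
      · exact Or.inr (hh ▸ le_refl' _)
      · exact Or.inl hh
    · exact Or.inr h
  case inr.inr => exact le_total_of_le h1 h2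

end PPTree
theorem mu_descend {T S : PPTree} {μ : T.V → S.VE}
    (hrec : IsRecon T S μ) (hfree : IsHGTFree T S μ) :
    ∀ n (l : T.V), T.parent^[n] l ≠ T.root → S.leVE (μ l) (μ (T.parent^[n] l)) := by
  intro n
  induction n with
  | zero => intro l _; exact PPTree.leVE_refl _
  | succ n ih =>
    intro l htop
    rw [Function.iterate_succ_apply'] at htop ⊢
    set v := T.parent^[n] l with hv
    have hvroot : v ≠ T.root := by
      intro h; apply htop; rw [h, T.parent_root]
    have hstep : S.leVE (μ v) (μ (T.parent v)) := by
      have hcmp := hfree v hvroot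
      have hlt : T.lt v (T.parent v) :=
        ⟨PPTree.le_parent' v, Ne.symm (PPTree.parent_ne_self hvroot)⟩
      have hR3 := hrec.R3 (T.parent v) v hlt
      rcases hcmp with h | h
      · by_cases he : μ (T.parent v) = μ v
        · rw [he]; exact PPTree.leVE_refl _
        · exact absurd ⟨h, he⟩ hR3
      · exact h
    exact PPTree.leVE_trans (ih l hvroot) hstep

theorem mu_le {T S : PPTree} {μ : T.V → S.VE}
    (hrec : IsRecon T S μ) (hfree : IsHGTFree T S μ) {l v : T.V}
    (h : T.le l v) (hvr : v ≠ T.root) : S.leVE (μ l) (μ v) := by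
  obtain ⟨n, hn⟩ := h
  subst hn
  exact mu_descend hrec hfree n l hvr

theorem key_bm {T : PPTree} {Y : Type} {σ : T.V → Y} {x y : T.V}
    (hx : T.isLeaf x) (hy : T.isLeaf y) (hxy : x ≠ y)
    (hdup : ¬ ExtremalDup T σ (T.lca x y)) : BMArc T σ x y := by
  set z := T.lca x y with hz
  have hxz : T.le x z := PPTree.le_lca_left x y
  have hyz : T.le y z := PPTree.le_lca_right x y
  have hzx : z ≠ x := by
    intro h; rw [h] at hyz; exact hxy (PPTree.eq_of_le_leaf hx hyz).symm
  have hzy : z ≠ y := by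
    intro h; rw [h] at hxz; exact hxy (PPTree.eq_of_le_leaf hy hxz)
  obtain ⟨c, hcp, hxc, hcz⟩ := PPTree.exists_child hxz (Ne.symm hzx)
  obtain ⟨c', hcp', hyc', hcz'⟩ := PPTree.exists_child hyz (Ne.symm hzy)
  have hcc' : c ≠ c' := by
    intro h; subst h
    have hzc : T.le z c := PPTree.lca_le x y hxc hyc'
    exact hcz (PPTree.le_antisymm' (hcp ▸ PPTree.le_parent' c) hzc)
  have hσxy : σ x ≠ σ y := by
    intro h
    exact hdup ⟨c, c', hcc', hcp, hcz, hcp', hcz', x, y, hx, hy, hxc, hyc', h⟩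
  refine ⟨hx, hy, hσxy, ?_⟩
  intro y' hy' hσy'
  have hxz' : T.le x (T.lca x y') := PPTree.le_lca_left x y'
  rcases PPTree.le_total_of_le hxz hxz' with h | h
  · exact h
  · rcases PPTree.le_total_of_le hxz' hxc with h2 | h2
    · exact absurd ⟨c, c', hcc', hcp, hcz, hcp', hcz', y', y, hy', hy,
        PPTree.le_trans' (PPTree.le_lca_right x y') h2, hyc', hσy'⟩ hdup
    · rcases PPTree.le_cases' h2 with hh | hh
      · exact absurd ⟨c, c', hcc', hcp, hcz, hcp', hcz', y', y, hy', hy,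
          hh ▸ PPTree.le_lca_right x y', hyc', hσy'⟩ hdup
      · exact hz ▸ hcp ▸ hh

theorem main_thm
    (T S : PPTree) (μ : T.V → S.VE) (σ : T.V → S.V)
    (hrec : IsRecon T S μ) (hfree : IsHGTFree T S μ)
    (hσ : SigmaCompat T S μ σ) (hR5 : R5 T S μ) :
    (∀ x y : T.V, ThetaMu T S μ x y → ThetaHat T σ x y) ∧
    (∀ x y : T.V, ThetaHat T σ x y → BMArc T σ x y ∧ BMArc T σ y x) ∧
    (∀ x y : T.V, BMArc T σ x y ∧ BMArc T σ y x → BMArc T σ x y) := by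
  refine ⟨?_, ?_, fun x y h => h.1⟩
  · rintro x y ⟨hx, hy, hxy, u, hμz, hur, hul⟩
    refine ⟨hx, hy, hxy, ?_⟩
    rintro ⟨v', v'', hne, hp', hne', hp'', hne'', l, l', hl, hl', hlv, hlv', hσll⟩
    have hzr : T.lca x y ≠ T.root := by
      intro h
      apply hur
      have h0 := (hrec.R0 (T.lca x y)).2 h
      rw [hμz] at h0
      exact Sum.inl.inj h0
    have hv'r : v' ≠ T.root := by
      intro h; apply hzr; rw [← hp', h, T.parent_root]
    have hv''r : v'' ≠ T.root := by
      intro h; apply hzr; rw [← hp'', h, T.parent_root]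
    have h1 : S.leVE (μ l) (μ v') := mu_le hrec hfree hlv hv'r
    have h2 : S.leVE (μ l') (μ v'') := mu_le hrec hfree hlv' hv''r
    rw [hσ l hl] at h1
    rw [hσ l' hl', ← hσll] at h2
    exact (hR5 _ u hμz hur hul).2 v' v'' hp' hne' hp'' hne'' hne
      (PPTree.cmp_of_above h1 h2)
  · rintro x y ⟨hx, hy, hxy, hdup⟩
    refine ⟨key_bm hx hy hxy hdup, key_bm hy hx (Ne.symm hxy) ?_⟩
    rw [PPTree.lca_comm]; exact hdup
/-- For every HGT-free σ-reconciliation `(T,S,μ,σ)`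
satisfying (R5), `Θ(T,ℓ_μ) ⊆ Θ(T,ℓ̂_T) ⊆ 𝔅_sym(T,σ) ⊆ 𝔅(T,σ)`,
identifying undirected graphs with symmetric digraphs. -/
theorem orthology_subset_rbmg
    (T S : PPTree) (μ : T.V → S.VE) (σ : T.V → S.V)
    (hrec : IsRecon T S μ) (hfree : IsHGTFree T S μ)
    (hσ : SigmaCompat T S μ σ) (hR5 : R5 T S μ) :
    (∀ x y : T.V, ThetaMu T S μ x y → ThetaHat T σ x y) ∧
    (∀ x y : T.V, ThetaHat T σ x y → BMArc T σ x y ∧ BMArc T σ y x) ∧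
    (∀ x y : T.V, BMArc T σ x y ∧ BMArc T σ y x → BMArc T σ x y) := by
  exact main_thm T S μ σ hrec hfree hσ hR5
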